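/- Let (a_R)_{R ∈ T} be nonnegative numbers indexed by a tree T of sets rooted at R₀, partitioned into generations T = ⋃_{k≥0} T_k with children of R ∈ T_k lying in T_{k+1}, and suppose the children of each R are pairwise disjoint subsets of R. Let ID ⊂ T satisfy: for R ∈ ID, a_R μ(R) ≤ (1/2) ∑_{Q child of R} a_Q μ(Q). Assume a_R ≤ C* for all R ∈ T. Then ∑_{R ∈ T} a_R μ(R) ≤ 2 ∑_{R ∈ T \ ID} a_R μ(R) + c C* μ(R₀) for an absolute constant c. -/

import Mathlib

open MeasureTheory Metric Set Filter
open scoped ENNReal NNReal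

/-- Iteration scheme for the packing condition: if for every `R` in the "increasing density"
family `ID` one has `a_R μ(R) ≤ (1/2) ∑_{Q child of R} a_Q μ(Q)`, the cubes of each
generation are pairwise disjoint subsets of `R₀`, and `0 ≤ a_R ≤ C*`, then
`∑_R a_R μ(R) ≤ 2 ∑_{R ∉ ID} a_R μ(R) + c C* μ(R₀)` for an absolute constant `c`. -/
theorem stmt15 :
    ∃ c : ℝ, 0 < c ∧
    ∀ (X : Type) (_ : MeasurableSpace X) (μ : Measure X), IsFiniteMeasure μ →
    ∀ (ι : Type) (cube : ι → Set X) (gen : ι → ℕ) (par : ι → ι)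
      (R₀ : Set X) (a : ι → ℝ) (ID : Set ι) (Cstar : ℝ), 0 ≤ Cstar →
      (∀ i, MeasurableSet (cube i)) →
      (∀ i, cube i ⊆ R₀) →
      -- parent structure: a child lies inside its parent, one generation down
      (∀ i, gen i ≠ 0 → gen (par i) + 1 = gen i ∧ cube i ⊆ cube (par i)) →
      -- cubes of a fixed generation are pairwise disjoint
      (∀ i j, i ≠ j → gen i = gen j → Disjoint (cube i) (cube j)) →
      (∀ i, 0 ≤ a i ∧ a i ≤ Cstar) →
      -- the ID inequality
      (∀ i ∈ ID, ENNReal.ofReal (a i) * μ (cube i) ≤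
        (1 / 2) * ∑' j : {j : ι // par j = i ∧ gen j = gen i + 1},
          ENNReal.ofReal (a j.1) * μ (cube j.1)) →
      ∑' i : ι, ENNReal.ofReal (a i) * μ (cube i) ≤
        2 * (∑' i : {i : ι // i ∉ ID}, ENNReal.ofReal (a i.1) * μ (cube i.1)) +
          ENNReal.ofReal (c * Cstar) * μ R₀ := by
  refine ⟨1, one_pos, ?_⟩
  intro X _ μ hμ ι cube gen par R₀ a ID Cstar hC hmeas hsub hpar hdisj ha hID
  set f : ι → ℝ≥0∞ := fun i => ENNReal.ofReal (a i) * μ (cube i) with hf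
  set B : ℝ≥0∞ := ENNReal.ofReal Cstar * μ R₀ with hB
  set S : ℕ → ℝ≥0∞ := fun k => ∑' i : {i : ι // gen i = k}, f i.1 with hS
  set N : ℕ → ℝ≥0∞ := fun k => ∑' i : {i : ι // i ∉ ID ∧ gen i = k}, f i.1 with hN
  -- measures of cubes of a fixed generation sum to at most μ R₀
  have hmeasum : ∀ k : ℕ, (∑' i : {i : ι // gen i = k}, μ (cube i.1)) ≤ μ R₀ := by
    intro k
    rw [ENNReal.tsum_eq_iSup_sum]
    refine iSup_le fun s => ?_
    have hdj : ∀ i ∈ s, ∀ j ∈ s, i ≠ j → Disjoint (cube i.1) (cube j.1) := by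
      intro i _ j _ hij
      exact hdisj i.1 j.1 (fun h => hij (Subtype.ext h)) (i.2.trans j.2.symm)
    calc ∑ i ∈ s, μ (cube i.1) = μ (⋃ i ∈ s, cube i.1) :=
          (measure_biUnion_finset (fun i hi j hj hij => hdj i hi j hj hij)
            (fun i _ => hmeas i.1)).symm
      _ ≤ μ R₀ := measure_mono (by simp only [iUnion_subset_iff]; exact fun i _ => hsub i.1)
  have hSB : ∀ k, S k ≤ B := by
    intro k
    calc S k ≤ ∑' i : {i : ι // gen i = k}, ENNReal.ofReal Cstar * μ (cube i.1) :=
          ENNReal.tsum_le_tsum fun i =>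
            mul_le_mul_of_nonneg_right (ENNReal.ofReal_le_ofReal (ha i.1).2) zero_le'
      _ = ENNReal.ofReal Cstar * ∑' i : {i : ι // gen i = k}, μ (cube i.1) := by
          rw [ENNReal.tsum_mul_left]
      _ ≤ B := mul_le_mul_of_nonneg_left (hmeasum k) zero_le'
  -- the recursion
  have hrec : ∀ k, S k ≤ (1 / 2) * S (k + 1) + N k := by
    intro k
    have hsplit : S k ≤ (∑' i : {i : ι // i ∈ ID ∧ gen i = k}, f i.1) + N k := by
      have h0 : S k = ∑' i : ι, Set.indicator {i : ι | gen i = k} f i := tsum_subtype _ f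
      have h1 : (∑' i : {i : ι // i ∈ ID ∧ gen i = k}, f i.1) =
          ∑' i : ι, Set.indicator {i : ι | i ∈ ID ∧ gen i = k} f i := tsum_subtype _ f
      have h2 : N k = ∑' i : ι, Set.indicator {i : ι | i ∉ ID ∧ gen i = k} f i :=
        tsum_subtype _ f
      rw [h0, h1, h2, ← ENNReal.tsum_add]
      refine ENNReal.tsum_le_tsum fun i => ?_
      by_cases hg : gen i = k
      · by_cases hi : i ∈ ID
        · simp [Set.indicator_apply, hg, hi]
        · simp [Set.indicator_apply, hg, hi]
      · simp [Set.indicator_apply, hg]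
    refine hsplit.trans (add_le_add ?_ le_rfl)
    calc (∑' i : {i : ι // i ∈ ID ∧ gen i = k}, f i.1)
        ≤ ∑' i : {i : ι // i ∈ ID ∧ gen i = k},
            (1 / 2) * ∑' j : {j : ι // par j = i.1 ∧ gen j = gen i.1 + 1}, f j.1 :=
          ENNReal.tsum_le_tsum fun i => hID i.1 i.2.1
      _ = (1 / 2) * ∑' i : {i : ι // i ∈ ID ∧ gen i = k},
            ∑' j : {j : ι // par j = i.1 ∧ gen j = gen i.1 + 1}, f j.1 :=
          ENNReal.tsum_mul_left
      _ ≤ (1 / 2) * S (k + 1) := by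
          refine mul_le_mul_of_nonneg_left ?_ zero_le'
          rw [hS, ← ENNReal.tsum_sigma]
          refine ENNReal.tsum_comp_le_tsum_of_injective
            (f := fun p : Σ i : {i : ι // i ∈ ID ∧ gen i = k},
              {j : ι // par j = i.1 ∧ gen j = gen i.1 + 1} =>
              (⟨p.2.1, by rw [p.2.2.2, p.1.2.2]⟩ : {j : ι // gen j = k + 1}))
            ?_ (fun j => f j.1)
          rintro ⟨⟨i, hi⟩, ⟨j, hj⟩⟩ ⟨⟨i', hi'⟩, ⟨j', hj'⟩⟩ h
          have hjj : j = j' := congrArg Subtype.val h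
          subst hjj
          have hii : i = i' := hj.1.symm.trans hj'.1
          subst hii
          rfl
  -- partial sums of S are controlled
  have hpart : ∀ K : ℕ, ∑ k ∈ Finset.range K, S k ≤
      S K + 2 * ∑ k ∈ Finset.range K, N k := by
    intro K
    induction K with
    | zero => simp
    | succ K ih =>
        calc ∑ k ∈ Finset.range (K + 1), S k
            = (∑ k ∈ Finset.range K, S k) + S K := Finset.sum_range_succ _ _
          _ ≤ (S K + 2 * ∑ k ∈ Finset.range K, N k) + S K := add_le_add ih le_rfl
          _ = S K + S K + 2 * ∑ k ∈ Finset.range K, N k := by ring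
          _ ≤ ((1 / 2) * S (K + 1) + N K) + ((1 / 2) * S (K + 1) + N K) +
              2 * ∑ k ∈ Finset.range K, N k :=
            add_le_add (add_le_add (hrec K) (hrec K)) le_rfl
          _ = ((1 / 2) * S (K + 1) + (1 / 2) * S (K + 1)) +
              2 * ((∑ k ∈ Finset.range K, N k) + N K) := by ring
          _ = S (K + 1) + 2 * ∑ k ∈ Finset.range (K + 1), N k := by
              have hhalf : (1 / 2 : ℝ≥0∞) * S (K + 1) + (1 / 2) * S (K + 1) = S (K + 1) := by
                rw [← add_mul, one_div, ENNReal.inv_two_add_inv_two, one_mul]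
              rw [hhalf, Finset.sum_range_succ]
  -- sum of N over generations is at most the non-ID sum
  have hNsum : (∑' k, N k) ≤ ∑' i : {i : ι // i ∉ ID}, f i.1 := by
    rw [hN, ← ENNReal.tsum_sigma]
    refine ENNReal.tsum_comp_le_tsum_of_injective
      (f := fun p : Σ k : ℕ, {i : ι // i ∉ ID ∧ gen i = k} =>
        (⟨p.2.1, p.2.2.1⟩ : {i : ι // i ∉ ID})) ?_ (fun i => f i.1)
    rintro ⟨k, ⟨i, hi⟩⟩ ⟨k', ⟨i', hi'⟩⟩ h
    have hii : i = i' := congrArg Subtype.val h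
    subst hii
    have hkk : k = k' := hi.2.symm.trans hi'.2
    subst hkk
    rfl
  -- total sum is the sum over generations
  have htotal : (∑' i : ι, f i) = ∑' k, S k := by
    rw [hS, ← ENNReal.tsum_sigma]
    exact ((Equiv.sigmaFiberEquiv gen).tsum_eq f).symm
  -- conclude
  have hbound : (∑' i : ι, f i) ≤ 2 * (∑' i : {i : ι // i ∉ ID}, f i.1) + B := by
    rw [htotal, ENNReal.tsum_eq_iSup_nat]
    refine iSup_le fun K => ?_
    calc ∑ k ∈ Finset.range K, S k ≤ S K + 2 * ∑ k ∈ Finset.range K, N k := hpart K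
      _ ≤ B + 2 * ∑' k, N k := by
          gcongr
          · exact hSB K
          · exact ENNReal.sum_le_tsum _
      _ ≤ B + 2 * ∑' i : {i : ι // i ∉ ID}, f i.1 := by gcongr
      _ = 2 * (∑' i : {i : ι // i ∉ ID}, f i.1) + B := add_comm _ _
  calc (∑' i : ι, f i) ≤ 2 * (∑' i : {i : ι // i ∉ ID}, f i.1) + B := hbound
    _ = 2 * (∑' i : {i : ι // i ∉ ID}, f i.1) + ENNReal.ofReal (1 * Cstar) * μ R₀ := by
        rw [one_mul, hB]
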